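/- Let G be a connected simple undirected graph on vertex set {1,…,N} with N ≥ 2, let L be its Laplacian, and let λ₂ = inf{ (vᵀLv)/(vᵀv) : v ∈ ℝ^N, v ≠ 0, 1ᵀv = 0 }. Let β > 0, γ ≥ 0, and let e : [0,∞) → ℝ^N be differentiable with 1ᵀe(t) = 0 for all t ≥ 0 and e'(t) = −β·L·e(t) + d(t), where d : [0,∞) → ℝ^N satisfies ‖d(t)‖₂ ≤ γ for all t ≥ 0. Then ‖e(t)‖₂ ≤ e^{−β·λ₂·t}·‖e(0)‖₂ + γ/(β·λ₂) for all t ≥ 0; in particular limsup_{t→∞} ‖e(t)‖₂ ≤ γ/(β·λ₂). -/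

import Mathlib

open Matrix Filter



lemma pair_sum_aux {N : ℕ} (i0 i1 : Fin N) (h : i0 ≠ i1) (x y : ℝ) :
    ∑ i, (if i = i0 then x else if i = i1 then y else 0) = x + y := by
  have : ∀ i : Fin N, (if i = i0 then x else if i = i1 then y else 0)
      = (if i = i0 then x else 0) + (if i = i1 then y else 0) := by
    intro i
    by_cases h0 : i = i0
    · subst h0; simp [if_neg h]
    · simp [h0]
  simp only [this, Finset.sum_add_distrib, Finset.sum_ite_eq', Finset.mem_univ, if_pos]

lemma lam2_facts (N : ℕ) (hN : 2 ≤ N) (G : SimpleGraph (Fin N)) [DecidableRel G.Adj]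
    (hconn : G.Connected)
    (L : Matrix (Fin N) (Fin N) ℝ) (hL : L = G.lapMatrix ℝ)
    (lam2 : ℝ)
    (hlam2 : lam2 = sInf {r : ℝ | ∃ v : Fin N → ℝ, v ≠ 0 ∧ (∑ i, v i) = 0 ∧
        r = (v ⬝ᵥ (L *ᵥ v)) / (v ⬝ᵥ v)}) :
    0 < lam2 ∧ ∀ v : Fin N → ℝ, (∑ i, v i) = 0 →
      lam2 * (v ⬝ᵥ v) ≤ v ⬝ᵥ (L *ᵥ v) := by
  subst hL
  set M := G.lapMatrix ℝ with hM
  set S := {r : ℝ | ∃ v : Fin N → ℝ, v ≠ 0 ∧ (∑ i, v i) = 0 ∧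
      r = (v ⬝ᵥ (M *ᵥ v)) / (v ⬝ᵥ v)} with hS
  -- quadratic form nonneg
  have hpsd := (SimpleGraph.posSemidef_lapMatrix ℝ G).2
  have hQ0 : ∀ x : Fin N → ℝ, 0 ≤ x ⬝ᵥ (M *ᵥ x) := by
    intro x; simpa using (SimpleGraph.posSemidef_lapMatrix ℝ G).dotProduct_mulVec_nonneg x
  have hdotpos : ∀ v : Fin N → ℝ, v ≠ 0 → 0 < v ⬝ᵥ v := by
    intro v hv
    have h1 : 0 ≤ v ⬝ᵥ v := Finset.sum_nonneg fun i _ => mul_self_nonneg _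
    rcases h1.lt_or_eq with h | h
    · exact h
    · exact absurd ((dotProduct_self_eq_zero).mp h.symm) hv
  -- the compact set
  set K : Set (Fin N → ℝ) := {v | (∑ i, v i) = 0 ∧ v ⬝ᵥ v = 1} with hK
  have hQcont : Continuous fun v : Fin N → ℝ => v ⬝ᵥ (M *ᵥ v) := by
    simp only [dotProduct, Matrix.mulVec]
    exact continuous_finset_sum _ fun i _ => (continuous_apply i).mul
      (continuous_finset_sum _ fun j _ => continuous_const.mul (continuous_apply j))
  have hdotcont : Continuous fun v : Fin N → ℝ => v ⬝ᵥ v := by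
    simp only [dotProduct]
    exact continuous_finset_sum _ fun i _ => (continuous_apply i).mul (continuous_apply i)
  have hsumcont : Continuous fun v : Fin N → ℝ => ∑ i, v i :=
    continuous_finset_sum _ fun i _ => continuous_apply i
  have hKclosed : IsClosed K :=
    (isClosed_eq hsumcont continuous_const).inter (isClosed_eq hdotcont continuous_const)
  have hKsub : K ⊆ Metric.closedBall 0 1 := by
    intro v hv
    rw [Metric.mem_closedBall, dist_zero_right]
    rw [pi_norm_le_iff_of_nonneg zero_le_one]
    intro i
    have h1 : v i * v i ≤ v ⬝ᵥ v := by
      rw [dotProduct]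
      exact Finset.single_le_sum (f := fun j => v j * v j)
        (fun j _ => mul_self_nonneg _) (Finset.mem_univ i)
    rw [hv.2] at h1
    rw [Real.norm_eq_abs]
    calc |v i| = Real.sqrt (v i * v i) := (Real.sqrt_mul_self_eq_abs _).symm
    _ ≤ Real.sqrt 1 := Real.sqrt_le_sqrt h1
    _ = 1 := Real.sqrt_one
  have hKcompact : IsCompact K :=
    (isCompact_closedBall (0 : Fin N → ℝ) 1).of_isClosed_subset hKclosed hKsub
  -- a canonical element
  have hi01 : (⟨0, by omega⟩ : Fin N) ≠ ⟨1, by omega⟩ := by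
    intro h; simpa using congrArg Fin.val h
  set a : ℝ := Real.sqrt (1/2) with ha
  have ha2 : a * a = 1/2 := Real.mul_self_sqrt (by norm_num)
  have hapos : 0 < a := Real.sqrt_pos.mpr (by norm_num)
  set v0 : Fin N → ℝ := fun i => if i = ⟨0, by omega⟩ then a else if i = ⟨1, by omega⟩ then -a else 0 with hv0
  have hv0sum : (∑ i, v0 i) = 0 := by
    rw [hv0, pair_sum_aux _ _ hi01]; ring
  have hv0dot : v0 ⬝ᵥ v0 = 1 := by
    have : ∀ i, v0 i * v0 i = if i = (⟨0, by omega⟩ : Fin N) then a*a else if i = ⟨1, by omega⟩ then a*a else 0 := by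
      intro i; rw [hv0]; dsimp only
      by_cases h0 : i = (⟨0, by omega⟩ : Fin N)
      · simp [h0]
      · by_cases h1 : i = (⟨1, by omega⟩ : Fin N) <;> simp [h0, h1]
    rw [dotProduct]
    simp only [this]
    rw [pair_sum_aux _ _ hi01, ha2]; norm_num
  have hv0ne : v0 ≠ 0 := by
    intro h
    have := congrFun h (⟨0, by omega⟩ : Fin N)
    rw [hv0] at this
    simp at this
    exact absurd this (ne_of_gt hapos)
  have hKne : K.Nonempty := ⟨v0, hv0sum, hv0dot⟩
  -- min of Q on K
  obtain ⟨w₀, hw₀K, hw₀min⟩ := hKcompact.exists_isMinOn hKne hQcont.continuousOn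
  set m : ℝ := w₀ ⬝ᵥ (M *ᵥ w₀) with hm
  have hmpos : 0 < m := by
    rcases (hQ0 w₀).lt_or_eq with h | h
    · exact h
    · exfalso
      have hz : Matrix.toLinearMap₂' ℝ (G.lapMatrix ℝ) w₀ w₀ = 0 := by
        rw [Matrix.toLinearMap₂'_apply']; exact h.symm ▸ (h ▸ rfl)
      rw [G.lapMatrix_toLinearMap₂'_apply'_eq_zero_iff_forall_reachable] at hz
      have hconst : ∀ i : Fin N, w₀ i = w₀ ⟨0, by omega⟩ :=
        fun i => hz i _ (hconn.preconnected i _)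
      have hc0 : w₀ (⟨0, by omega⟩ : Fin N) = 0 := by
        have hsz := hw₀K.1
        have : ∑ i : Fin N, w₀ i = (N : ℝ) * w₀ ⟨0, by omega⟩ := by
          rw [Finset.sum_congr rfl fun i _ => hconst i]
          simp [Finset.card_univ, mul_comm]
        rw [this] at hsz
        have hNne : (N : ℝ) ≠ 0 := Nat.cast_ne_zero.mpr (by omega)
        exact (mul_eq_zero.mp hsz).resolve_left hNne
      have : w₀ ⬝ᵥ w₀ = 0 := by
        rw [dotProduct]
        apply Finset.sum_eq_zero
        intro i _
        rw [hconst i, hc0, mul_zero]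
      rw [hw₀K.2] at this; norm_num at this
  -- every element of S is ≥ m
  have hSge : ∀ r ∈ S, m ≤ r := by
    rintro r ⟨v, hvne, hvsum, rfl⟩
    have hvv := hdotpos v hvne
    set c : ℝ := Real.sqrt (v ⬝ᵥ v) with hc
    have hcpos : 0 < c := Real.sqrt_pos.mpr hvv
    have hcc : c * c = v ⬝ᵥ v := Real.mul_self_sqrt hvv.le
    set w : Fin N → ℝ := c⁻¹ • v with hw
    have hwK : w ∈ K := by
      constructor
      · simp only [hw, Pi.smul_apply, smul_eq_mul, ← Finset.mul_sum, hvsum, mul_zero]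
      · rw [hw, smul_dotProduct, dotProduct_smul, smul_eq_mul, smul_eq_mul,
          ← mul_assoc]
        field_simp
        linarith [hcc]
    have hQw : w ⬝ᵥ (M *ᵥ w) = (v ⬝ᵥ (M *ᵥ v)) / (v ⬝ᵥ v) := by
      rw [hw, Matrix.mulVec_smul, smul_dotProduct, dotProduct_smul,
        smul_eq_mul, smul_eq_mul, ← mul_assoc, ← hcc]
      field_simp
    have := hw₀min hwK
    simpa [hQw] using this
  have hSne : S.Nonempty := ⟨_, v0, hv0ne, hv0sum, rfl⟩
  have hbdd : BddBelow S := ⟨m, fun r hr => hSge r hr⟩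
  have hlam2m : m ≤ lam2 := by
    rw [hlam2]; exact le_csInf hSne hSge
  refine ⟨lt_of_lt_of_le hmpos hlam2m, ?_⟩
  intro v hvsum
  by_cases hv : v = 0
  · subst hv; simp
  · have hvv := hdotpos v hv
    have hmem : (v ⬝ᵥ (M *ᵥ v)) / (v ⬝ᵥ v) ∈ S := ⟨v, hv, hvsum, rfl⟩
    have hle : lam2 ≤ (v ⬝ᵥ (M *ᵥ v)) / (v ⬝ᵥ v) := by
      rw [hlam2]; exact csInf_le hbdd hmem
    calc lam2 * (v ⬝ᵥ v) ≤ ((v ⬝ᵥ (M *ᵥ v)) / (v ⬝ᵥ v)) * (v ⬝ᵥ v) :=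
          mul_le_mul_of_nonneg_right hle hvv.le
    _ = v ⬝ᵥ (M *ᵥ v) := div_mul_cancel₀ _ (ne_of_gt hvv)


set_option maxHeartbeats 1000000 in
/-- input-to-state error bound for the disagreement dynamics
`e' = −β·L·e + d` with `1ᵀe(t) = 0` and `‖d(t)‖₂ ≤ γ`:
`‖e(t)‖₂ ≤ exp(−β·λ₂·t)·‖e(0)‖₂ + γ/(β·λ₂)` for all `t ≥ 0`, hence
`limsup_{t→∞} ‖e(t)‖₂ ≤ γ/(β·λ₂)`. -/
theorem disagreement_error_iss_bound
    (N : ℕ) (hN : 2 ≤ N) (G : SimpleGraph (Fin N)) [DecidableRel G.Adj]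
    (hconn : G.Connected)
    (L : Matrix (Fin N) (Fin N) ℝ) (hL : L = G.lapMatrix ℝ)
    (lam2 : ℝ)
    (hlam2 : lam2 = sInf {r : ℝ | ∃ v : Fin N → ℝ, v ≠ 0 ∧ (∑ i, v i) = 0 ∧
        r = (v ⬝ᵥ (L *ᵥ v)) / (v ⬝ᵥ v)})
    (β : ℝ) (hβ : 0 < β) (γ : ℝ) (hγ : 0 ≤ γ)
    (e d : ℝ → Fin N → ℝ)
    (he : Differentiable ℝ e)
    (hsum : ∀ t ≥ (0 : ℝ), ∑ i, e t i = 0)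
    (hode : ∀ t ≥ (0 : ℝ), HasDerivAt e (-(β • (L *ᵥ e t)) + d t) t)
    (hd : ∀ t ≥ (0 : ℝ), Real.sqrt (∑ i, d t i ^ 2) ≤ γ) :
    (∀ t ≥ (0 : ℝ),
      Real.sqrt (∑ i, e t i ^ 2)
        ≤ Real.exp (-(β * lam2 * t)) * Real.sqrt (∑ i, e 0 i ^ 2) + γ / (β * lam2)) ∧
    limsup (fun t : ℝ => Real.sqrt (∑ i, e t i ^ 2)) atTop ≤ γ / (β * lam2) := by
  obtain ⟨hlam, hray⟩ := lam2_facts N hN G hconn L hL lam2 hlam2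
  set a : ℝ := β * lam2 with haa
  have hapos : 0 < a := mul_pos hβ hlam
  set s : ℝ → ℝ := fun t => ∑ i, e t i ^ 2 with hs
  have hsapp : ∀ t, (∑ i, e t i ^ 2) = s t := fun t => rfl
  have hsnn : ∀ t, 0 ≤ s t := fun t => Finset.sum_nonneg fun i _ => sq_nonneg _
  have hscont : Continuous s :=
    continuous_finset_sum _ fun i _ => ((continuous_apply i).comp he.continuous).pow 2
  have key : ∀ ε > (0:ℝ), ∀ t ≥ (0:ℝ),
      Real.sqrt (s t) ≤ Real.exp (-(a*t)) * Real.sqrt (s 0) + γ / a + 2*ε := by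
    intro ε hε t ht
    set c : ℝ := γ / a + ε with hc
    have hcnn : 0 ≤ c := by positivity
    have hca : c * a = γ + ε * a := by rw [hc]; field_simp
    set φ : ℝ → ℝ := fun τ => Real.sqrt (ε^2 + s τ) with hφ
    have hφpos : ∀ τ, 0 < ε^2 + s τ := fun τ => by nlinarith [hsnn τ]
    have hφps : ∀ τ, 0 < φ τ := fun τ => Real.sqrt_pos.mpr (hφpos τ)
    have hφsq : ∀ τ, φ τ * φ τ = ε^2 + s τ := fun τ => Real.mul_self_sqrt (hφpos τ).le
    have hnle : ∀ τ, Real.sqrt (s τ) ≤ φ τ := fun τ =>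
      Real.sqrt_le_sqrt (by nlinarith [sq_nonneg ε])
    have hεle : ∀ τ, ε ≤ φ τ := fun τ => by
      have h1 : ε = Real.sqrt (ε^2) := (Real.sqrt_sq hε.le).symm
      rw [h1]; exact Real.sqrt_le_sqrt (by nlinarith [hsnn τ])
    set F : ℝ → ℝ := fun τ => φ τ * Real.exp (a*τ) - c * Real.exp (a*τ) with hF
    have hFderiv : ∀ τ ≥ (0:ℝ), ∃ u, HasDerivAt F u τ ∧ u ≤ 0 := by
      intro τ hτ
      have hde := hode τ hτ
      set w : Fin N → ℝ := -(β • (L *ᵥ e τ)) + d τ with hwdef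
      have hsd : HasDerivAt s (∑ i, 2 * e τ i * w i) τ := by
        have h1 := fun i => ((hasDerivAt_pi.mp hde) i).pow 2
        have h2 := HasDerivAt.sum (fun i (_ : i ∈ Finset.univ) => h1 i)
        have h3 : (∑ i, (fun x => e x i) ^ 2) = s := by ext t; simp [hs]
        rw [← h3]; simpa using h2
      set D : ℝ := ∑ i, 2 * e τ i * w i with hD
      have hφd : HasDerivAt φ (D / (2 * φ τ)) τ := by
        have h3 := ((hasDerivAt_const τ (ε^2)).add hsd).sqrt (ne_of_gt (hφpos τ))
        simpa using h3
      have hexp : HasDerivAt (fun τ : ℝ => Real.exp (a*τ)) (Real.exp (a*τ) * a) τ := by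
        have h1 : HasDerivAt (fun τ : ℝ => a * τ) a τ := by
          simpa using (hasDerivAt_id τ).const_mul a
        exact h1.exp
      have hFd : HasDerivAt F (D/(2*φ τ) * Real.exp (a*τ) + φ τ * (Real.exp (a*τ) * a)
          - c * (Real.exp (a*τ) * a)) τ := (hφd.mul hexp).sub (hexp.const_mul c)
      -- bound D
      have hDeq : D = 2 * (e τ ⬝ᵥ w) := by
        rw [hD, dotProduct, Finset.mul_sum]
        exact Finset.sum_congr rfl fun i _ => by ring
      have hsplit : e τ ⬝ᵥ w = -(β * (e τ ⬝ᵥ (L *ᵥ e τ))) + e τ ⬝ᵥ d τ := by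
        rw [hwdef, dotProduct_add, dotProduct_neg, dotProduct_smul,
          smul_eq_mul]
      have hdd : e τ ⬝ᵥ e τ = s τ := by
        rw [dotProduct]; exact Finset.sum_congr rfl fun i _ => by ring
      have hray' : lam2 * s τ ≤ e τ ⬝ᵥ (L *ᵥ e τ) := by
        have h4 := hray (e τ) (hsum τ hτ)
        rw [hdd] at h4; exact h4
      have hcs : e τ ⬝ᵥ d τ ≤ Real.sqrt (s τ) * γ := by
        have h1 : (∑ i, e τ i * d τ i)^2 ≤ (∑ i, e τ i ^2) * (∑ i, d τ i ^2) :=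
          Finset.sum_mul_sq_le_sq_mul_sq _ _ _
        have h2 : e τ ⬝ᵥ d τ ≤ Real.sqrt ((∑ i, e τ i ^2) * (∑ i, d τ i ^2)) := by
          calc e τ ⬝ᵥ d τ ≤ |∑ i, e τ i * d τ i| := le_abs_self _
          _ = Real.sqrt ((∑ i, e τ i * d τ i)^2) := (Real.sqrt_sq_eq_abs _).symm
          _ ≤ _ := Real.sqrt_le_sqrt h1
        rw [Real.sqrt_mul (Finset.sum_nonneg fun i _ => sq_nonneg _)] at h2
        exact h2.trans (mul_le_mul_of_nonneg_left (hd τ hτ) (Real.sqrt_nonneg _))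
      have hDle : D ≤ -(2*a*(s τ)) + 2*γ*Real.sqrt (s τ) := by
        rw [hDeq, hsplit]
        have h5 : β * (lam2 * s τ) ≤ β * (e τ ⬝ᵥ (L *ᵥ e τ)) :=
          mul_le_mul_of_nonneg_left hray' hβ.le
        rw [haa]; nlinarith [hcs]
      have hXle : D/(2*φ τ) + a * φ τ - c * a ≤ 0 := by
        have h2φ : 0 < 2 * φ τ := by positivity
        have h6 : D / (2*φ τ) ≤ c*a - a*φ τ := by
          rw [div_le_iff₀ h2φ]
          nlinarith [hDle, hφsq τ, hca,
            mul_nonneg hγ (sub_nonneg.mpr (hnle τ)),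
            mul_nonneg (mul_nonneg hapos.le hε.le) (sub_nonneg.mpr (hεle τ))]
        linarith
      refine ⟨_, hFd, ?_⟩
      have hE := Real.exp_pos (a*τ)
      nlinarith [mul_le_mul_of_nonneg_left hXle hE.le]
    have hφc : Continuous φ := Real.continuous_sqrt.comp (continuous_const.add hscont)
    have hexpc : Continuous fun τ : ℝ => Real.exp (a*τ) :=
      Real.continuous_exp.comp (continuous_const.mul continuous_id)
    have hFcont : Continuous F := (hφc.mul hexpc).sub (continuous_const.mul hexpc)
    have hanti : AntitoneOn F (Set.Ici 0) := by
      apply antitoneOn_of_deriv_nonpos (convex_Ici 0) hFcont.continuousOn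
      · intro x hx
        rw [interior_Ici] at hx
        obtain ⟨u, hu, _⟩ := hFderiv x (le_of_lt hx)
        exact hu.differentiableAt.differentiableWithinAt
      · intro x hx
        rw [interior_Ici] at hx
        obtain ⟨u, hu, hu0⟩ := hFderiv x (le_of_lt hx)
        rw [hu.deriv]; exact hu0
    have hFt : F t ≤ F 0 := hanti (Set.mem_Ici.mpr le_rfl) (Set.mem_Ici.mpr ht) ht
    have hF0 : F 0 = φ 0 - c := by simp [hF]
    have hFt' : φ t * Real.exp (a*t) - c * Real.exp (a*t) ≤ φ 0 - c := by
      rw [← hF0]; exact hFt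
    have hEpos : (0:ℝ) < Real.exp (a*t) := Real.exp_pos _
    have hexpneg : Real.exp (-(a*t)) = (Real.exp (a*t))⁻¹ := by rw [← Real.exp_neg]
    have hφt : φ t ≤ Real.exp (-(a*t)) * φ 0 + c := by
      rw [hexpneg]
      have h2 : φ t ≤ (φ 0 + c * Real.exp (a*t)) / Real.exp (a*t) := by
        rw [le_div_iff₀ hEpos]; linarith [hFt', mul_nonneg hcnn hEpos.le, hcnn]
      calc φ t ≤ (φ 0 + c * Real.exp (a*t)) / Real.exp (a*t) := h2
      _ = (Real.exp (a*t))⁻¹ * φ 0 + c := by field_simp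
    have hφ0 : φ 0 ≤ Real.sqrt (s 0) + ε := by
      have h1 : ε^2 + s 0 ≤ (Real.sqrt (s 0) + ε)^2 := by
        nlinarith [Real.sq_sqrt (hsnn 0), Real.sqrt_nonneg (s 0), hε.le]
      calc φ 0 ≤ Real.sqrt ((Real.sqrt (s 0) + ε)^2) := Real.sqrt_le_sqrt h1
      _ = Real.sqrt (s 0) + ε := Real.sqrt_sq (by positivity)
    have hexple : Real.exp (-(a*t)) ≤ 1 := Real.exp_le_one_iff.mpr (by nlinarith)
    calc Real.sqrt (s t) ≤ φ t := hnle t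
    _ ≤ Real.exp (-(a*t)) * φ 0 + c := hφt
    _ ≤ Real.exp (-(a*t)) * (Real.sqrt (s 0) + ε) + c :=
        add_le_add_left (mul_le_mul_of_nonneg_left hφ0 (Real.exp_nonneg _)) _
    _ ≤ Real.exp (-(a*t)) * Real.sqrt (s 0) + γ/a + 2*ε := by
        rw [hc]; nlinarith [hexple, Real.exp_nonneg (-(a*t)), hε.le]
  have part1 : ∀ t ≥ (0:ℝ), Real.sqrt (s t)
      ≤ Real.exp (-(a*t)) * Real.sqrt (s 0) + γ/a := by
    intro t ht
    refine le_of_forall_pos_le_add ?_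
    intro δ hδ
    have h7 := key (δ/2) (by positivity) t ht
    linarith
  constructor
  · intro t ht
    rw [hsapp t, hsapp 0]
    exact part1 t ht
  · simp only [hsapp]
    have hg : Tendsto (fun t : ℝ => Real.exp (-(a*t)) * Real.sqrt (s 0) + γ/a) atTop
        (nhds (0 * Real.sqrt (s 0) + γ/a)) := by
      apply Tendsto.add_const
      apply Tendsto.mul_const
      have h1 : Tendsto (fun t : ℝ => a * t) atTop atTop :=
        Tendsto.const_mul_atTop hapos tendsto_id
      have h2 : Tendsto (fun t : ℝ => -(a*t)) atTop atBot := tendsto_neg_atBot_iff.mpr h1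
      exact Real.tendsto_exp_atBot.comp h2
    rw [zero_mul, zero_add] at hg
    have hle : (fun t : ℝ => Real.sqrt (s t)) ≤ᶠ[atTop]
        fun t => Real.exp (-(a*t)) * Real.sqrt (s 0) + γ/a :=
      Filter.eventually_atTop.mpr ⟨0, fun t ht => part1 t ht⟩
    have h1 : limsup (fun t : ℝ => Real.sqrt (s t)) atTop
        ≤ limsup (fun t : ℝ => Real.exp (-(a*t)) * Real.sqrt (s 0) + γ/a) atTop := by
      have hcb : IsCoboundedUnder (· ≤ ·) atTop (fun t : ℝ => Real.sqrt (s t)) :=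
        Filter.IsBoundedUnder.isCoboundedUnder_le
          ⟨0, Filter.eventually_map.mpr (Filter.Eventually.of_forall fun t => Real.sqrt_nonneg _)⟩
      exact limsup_le_limsup hle hcb hg.isBoundedUnder_le
    rw [hg.limsup_eq] at h1
    exact h1
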